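/- arXiv:2008.06766 — 2 statements merged into one kernel-verified Lean document; each statement's English description precedes it below -/
import Mathlib

section
/- Fix δ > 0 and ε > 0 and a probability law λ₀ on ℝ with finite mean. Suppose λ is a probability law on ℝ that can be written as λ(·) = ∫ K(z,·) λ₁(dz), where K is a probability kernel with K(z, [z−δ, z+δ]ᶜ) = 0 for all z, and where the total variation distance between λ₀ and λ₁ is less than 8ε³. Then there exists a coupling ν of λ and λ₀ (a probability measure on ℝ² with first marginal λ and second marginal λ₀) such that ν({(x,y) : |x−y| > δ}) < 8ε³. -/
open MeasureTheory ProbabilityTheory Filter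
open scoped ENNReal NNReal

noncomputable section

namespace Paper

/-- Total variation distance between two (finite) measures on `ℝ`,
`sup_A |μ(A) − ν(A)|` over measurable sets `A`. -/
def tvDist (μ ν : Measure ℝ) : ℝ :=
  ⨆ s : {s : Set ℝ // MeasurableSet s}, |(μ s.1).toReal - (ν s.1).toReal|

/-- If `λ = ∫ K(z,·) λ₁(dz)` with `K(z, [z−δ, z+δ]ᶜ) = 0` for all `z` and
`‖λ₀ − λ₁‖_TV < 8ε³`, then there is a coupling `ν` of `λ` and `λ₀` with
`ν({|x − y| > δ}) < 8ε³`. -/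
theorem statement9 (δ ε : ℝ) (hδ : 0 < δ) (hε : 0 < ε)
    (lam lam0 lam1 : Measure ℝ)
    [IsProbabilityMeasure lam] [IsProbabilityMeasure lam0] [IsProbabilityMeasure lam1]
    (hmean : Integrable (fun x : ℝ => x) lam0)
    (K : Kernel ℝ ℝ) [IsMarkovKernel K]
    (hK : ∀ z : ℝ, K z (Set.Icc (z - δ) (z + δ))ᶜ = 0)
    (hlam : lam = lam1.bind fun z => K z)
    (htv : tvDist lam0 lam1 < 8 * ε ^ 3) :
    ∃ ν : Measure (ℝ × ℝ), IsProbabilityMeasure ν ∧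
      ν.map Prod.fst = lam ∧ ν.map Prod.snd = lam0 ∧
      ν {p : ℝ × ℝ | δ < |p.1 - p.2|} < ENNReal.ofReal (8 * ε ^ 3) := by
  obtain ⟨s, hs, h1, h2⟩ := hahn_decomposition (μ := lam0) (ν := lam1)
  set μ : Measure ℝ := lam1.restrict s + lam0.restrict sᶜ with hμ
  have hle1 : lam1.restrict s ≤ lam0.restrict s := by
    refine Measure.le_iff.2 fun t ht => ?_
    rw [Measure.restrict_apply ht, Measure.restrict_apply ht]
    exact h1 _ (ht.inter hs) Set.inter_subset_right
  have hle0 : lam0.restrict sᶜ ≤ lam1.restrict sᶜ := by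
    refine Measure.le_iff.2 fun t ht => ?_
    rw [Measure.restrict_apply ht, Measure.restrict_apply ht]
    exact h2 _ (ht.inter hs.compl) Set.inter_subset_right
  set ρ₀ : Measure ℝ := lam0.restrict s - lam1.restrict s with hρ₀
  set ρ₁ : Measure ℝ := lam1.restrict sᶜ - lam0.restrict sᶜ with hρ₁
  have h0 : ρ₀ + μ = lam0 := by
    rw [hρ₀, hμ, ← add_assoc, Measure.sub_add_cancel_of_le hle1,
      Measure.restrict_add_restrict_compl hs]
  have h1' : ρ₁ + μ = lam1 := by
    rw [hρ₁, hμ, add_comm (lam1.restrict s), ← add_assoc,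
      Measure.sub_add_cancel_of_le hle0, add_comm,
      Measure.restrict_add_restrict_compl hs]
  have hρ₀fin : IsFiniteMeasure ρ₀ :=
    isFiniteMeasure_of_le lam0 (h0 ▸ Measure.le_add_right le_rfl)
  have hρ₁fin : IsFiniteMeasure ρ₁ :=
    isFiniteMeasure_of_le lam1 (h1' ▸ Measure.le_add_right le_rfl)
  set c : ℝ≥0∞ := ρ₀ Set.univ with hc
  have hcfin : c ≠ ⊤ := measure_ne_top ρ₀ _
  have hcs : c = lam0 s - lam1 s := by
    rw [hc, hρ₀, Measure.sub_apply MeasurableSet.univ hle1,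
      Measure.restrict_apply MeasurableSet.univ, Measure.restrict_apply MeasurableSet.univ,
      Set.univ_inter]
  have hls : lam1 s ≤ lam0 s := h1 s hs Set.Subset.rfl
  have hc1 : ρ₁ Set.univ = c := by
    have e1 : ρ₁ Set.univ = lam1 sᶜ - lam0 sᶜ := by
      rw [hρ₁, Measure.sub_apply MeasurableSet.univ hle0,
        Measure.restrict_apply MeasurableSet.univ, Measure.restrict_apply MeasurableSet.univ,
        Set.univ_inter]
    have hls' : lam0 sᶜ ≤ lam1 sᶜ := h2 sᶜ hs.compl Set.Subset.rfl
    have hfin : (lam1 s + lam0 sᶜ) ≠ ⊤ :=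
      ENNReal.add_ne_top.2 ⟨measure_ne_top _ _, measure_ne_top _ _⟩
    rw [e1, hcs]
    have eA : lam1 s + lam0 sᶜ + (lam1 sᶜ - lam0 sᶜ) = 1 := by
      calc lam1 s + lam0 sᶜ + (lam1 sᶜ - lam0 sᶜ)
          = lam1 s + ((lam1 sᶜ - lam0 sᶜ) + lam0 sᶜ) := by ring
        _ = lam1 s + lam1 sᶜ := by rw [tsub_add_cancel_of_le hls']
        _ = 1 := by rw [measure_add_measure_compl hs, measure_univ]
    have eB : lam1 s + lam0 sᶜ + (lam0 s - lam1 s) = 1 := by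
      calc lam1 s + lam0 sᶜ + (lam0 s - lam1 s)
          = ((lam0 s - lam1 s) + lam1 s) + lam0 sᶜ := by ring
        _ = lam0 s + lam0 sᶜ := by rw [tsub_add_cancel_of_le hls]
        _ = 1 := by rw [measure_add_measure_compl hs, measure_univ]
    rw [← ENNReal.add_right_inj hfin]
    exact eA.trans eB.symm
  -- the coupling of lam1 and lam0
  have hd : Measurable fun z : ℝ => (z, z) := measurable_id.prodMk measurable_id
  set π : Measure (ℝ × ℝ) := μ.map (fun z => (z, z)) + c⁻¹ • (ρ₁.prod ρ₀) with hπ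
  have hsmul : ∀ ρ : Measure ℝ, ρ Set.univ = c → (c⁻¹ * c) • ρ = ρ := by
    intro ρ hρ
    rcases eq_or_ne c 0 with h | h
    · have : ρ = 0 := Measure.measure_univ_eq_zero.1 (by rw [hρ, h])
      simp [this]
    · rw [ENNReal.inv_mul_cancel h hcfin, one_smul]
  have hπfst : π.map Prod.fst = lam1 := by
    rw [hπ, Measure.map_add _ _ measurable_fst, Measure.map_smul,
      Measure.map_map measurable_fst hd, Measure.map_fst_prod]
    have e1 : (Prod.fst ∘ fun z : ℝ => (z, z)) = id := rfl
    rw [e1, Measure.map_id, hc, smul_smul, hsmul ρ₁ hc1, add_comm]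
    exact h1'
  have hπsnd : π.map Prod.snd = lam0 := by
    rw [hπ, Measure.map_add _ _ measurable_snd, Measure.map_smul,
      Measure.map_map measurable_snd hd, Measure.map_snd_prod]
    have e1 : (Prod.snd ∘ fun z : ℝ => (z, z)) = id := rfl
    rw [e1, Measure.map_id, hc1, smul_smul, hsmul ρ₀ hc.symm, add_comm]
    exact h0
  -- the kernel carrying the first coordinate through K
  set L : Kernel (ℝ × ℝ) (ℝ × ℝ) :=
    (K.comap Prod.fst measurable_fst).prod (Kernel.deterministic Prod.snd measurable_snd)
    with hLdef
  have hL : ∀ p : ℝ × ℝ, L p = (K p.1).map fun x => (x, p.2) := by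
    intro p
    rw [hLdef, Kernel.prod_apply, Kernel.comap_apply,
      Kernel.deterministic_apply measurable_snd, Measure.prod_dirac]
  set ν : Measure (ℝ × ℝ) := π.bind (fun p => L p) with hν
  have hmb : ∀ {g : ℝ × ℝ → ℝ}, Measurable g →
      ν.map g = π.bind fun p => (L p).map g := by
    intro g hg
    have hdg : Measurable fun x : ℝ × ℝ => Measure.dirac (g x) :=
      Measure.measurable_dirac.comp hg
    rw [hν, ← Measure.bind_dirac_eq_map _ hg, Measure.bind_bind L.measurable.aemeasurable hdg.aemeasurable]
    simp_rw [Measure.bind_dirac_eq_map _ hg]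
  have hfst : ν.map Prod.fst = lam := by
    rw [hmb measurable_fst]
    have e1 : ∀ p : ℝ × ℝ, (L p).map Prod.fst = K p.1 := by
      intro p
      have hmp : Measurable fun x : ℝ => (x, p.2) := measurable_id.prodMk measurable_const
      rw [hL, Measure.map_map measurable_fst hmp]
      have : (Prod.fst ∘ fun x : ℝ => (x, p.2)) = id := rfl
      rw [this, Measure.map_id]
    simp_rw [e1]
    have e2 : π.bind (fun p : ℝ × ℝ => K p.1) = (π.map Prod.fst).bind fun z => K z := by
      ext t ht
      have hKf : Measurable fun p : ℝ × ℝ => K p.1 := K.measurable.comp measurable_fst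
      rw [Measure.bind_apply ht hKf.aemeasurable,
        Measure.bind_apply ht K.measurable.aemeasurable,
        lintegral_map (K.measurable_coe ht) measurable_fst]
    rw [e2, hπfst, hlam]
  have hsnd : ν.map Prod.snd = lam0 := by
    rw [hmb measurable_snd]
    have e1 : ∀ p : ℝ × ℝ, (L p).map Prod.snd = Measure.dirac p.2 := by
      intro p
      have hmp : Measurable fun x : ℝ => (x, p.2) := measurable_id.prodMk measurable_const
      rw [hL, Measure.map_map measurable_snd hmp]
      have : (Prod.snd ∘ fun x : ℝ => (x, p.2)) = fun _ : ℝ => p.2 := rfl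
      rw [this, Measure.map_const, measure_univ, one_smul]
    simp_rw [e1]
    rw [Measure.bind_dirac_eq_map _ measurable_snd, hπsnd]
  have hνprob : IsProbabilityMeasure ν := by
    constructor
    have : ν Set.univ = (ν.map Prod.fst) Set.univ := by
      rw [Measure.map_apply measurable_fst MeasurableSet.univ, Set.preimage_univ]
    rw [this, hfst, measure_univ]
  -- the bad set
  set B : Set (ℝ × ℝ) := {p : ℝ × ℝ | δ < |p.1 - p.2|} with hB
  have hBm : MeasurableSet B :=
    measurableSet_lt measurable_const ((measurable_fst.sub measurable_snd).abs)
  have hLzero : ∀ z : ℝ, L (z, z) B = 0 := by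
    intro z
    have hmp : Measurable fun x : ℝ => (x, (z, z).2) := measurable_id.prodMk measurable_const
    rw [hL, Measure.map_apply hmp hBm]
    refine measure_mono_null ?_ (hK z)
    intro x hx
    simp only [Set.mem_preimage, hB, Set.mem_setOf_eq] at hx
    intro hmem
    rw [Set.mem_Icc] at hmem
    exact absurd (abs_le.2 ⟨by linarith [hmem.1], by linarith [hmem.2]⟩) (not_le.2 hx)
  have hbad : ν B ≤ c := by
    rw [hν, Measure.bind_apply hBm L.measurable.aemeasurable, hπ, lintegral_add_measure,
      lintegral_smul_measure]
    have ediag : ∫⁻ p, L p B ∂(μ.map fun z => (z, z)) = 0 := by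
      rw [lintegral_map (L.measurable_coe hBm) hd]
      simp [hLzero]
    have eprod : ∫⁻ p, L p B ∂(ρ₁.prod ρ₀) ≤ c * c := by
      calc ∫⁻ p, L p B ∂(ρ₁.prod ρ₀) ≤ ∫⁻ _, 1 ∂(ρ₁.prod ρ₀) :=
            lintegral_mono fun p => prob_le_one
        _ = (ρ₁.prod ρ₀) Set.univ := lintegral_one
        _ = c * c := by
            rw [← Set.univ_prod_univ, Measure.prod_prod, hc1, ← hc]
    calc ∫⁻ p, L p B ∂(μ.map fun z => (z, z)) + c⁻¹ * ∫⁻ p, L p B ∂(ρ₁.prod ρ₀)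
        ≤ 0 + c⁻¹ * (c * c) := by
          rw [ediag]; exact add_le_add le_rfl (mul_le_mul_right eprod _)
      _ ≤ c := by
          rw [zero_add]
          rcases eq_or_ne c 0 with h | h
          · simp [h]
          · rw [← mul_assoc, ENNReal.inv_mul_cancel h hcfin, one_mul]
  have hcbound : c < ENNReal.ofReal (8 * ε ^ 3) := by
    have htr : c.toReal ≤ tvDist lam0 lam1 := by
      have hbdd : BddAbove (Set.range fun t : {t : Set ℝ // MeasurableSet t} =>
          |(lam0 t.1).toReal - (lam1 t.1).toReal|) := by
        refine ⟨2, ?_⟩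
        rintro x ⟨t, rfl⟩
        have ha : (lam0 t.1).toReal ≤ 1 :=
          ENNReal.toReal_le_of_le_ofReal one_pos.le (by simpa using prob_le_one)
        have hb : (lam1 t.1).toReal ≤ 1 :=
          ENNReal.toReal_le_of_le_ofReal one_pos.le (by simpa using prob_le_one)
        have ha' : 0 ≤ (lam0 t.1).toReal := ENNReal.toReal_nonneg
        have hb' : 0 ≤ (lam1 t.1).toReal := ENNReal.toReal_nonneg
        rw [abs_le]
        constructor <;> linarith
      have hel : c.toReal ≤ |(lam0 s).toReal - (lam1 s).toReal| := by
        rw [hcs, ENNReal.toReal_sub_of_le hls (measure_ne_top _ _)]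
        exact le_abs_self _
      exact hel.trans (le_ciSup hbdd ⟨s, hs⟩)
    calc c = ENNReal.ofReal c.toReal := (ENNReal.ofReal_toReal hcfin).symm
      _ < ENNReal.ofReal (8 * ε ^ 3) := by
          rw [ENNReal.ofReal_lt_ofReal_iff (by positivity)]
          exact lt_of_le_of_lt htr htv
  exact ⟨ν, hνprob, hfst, hsnd, lt_of_le_of_lt hbad hcbound⟩

end Paper
end
end

section
/- Let {Z_k}_{k≥0} be a Markov chain on the nonnegative reals such that for some constants α, β, γ > 0 (uniform in k and the starting point): |E[Z_k | Z_{k−1}] − Z_{k−1}| ≤ γ and E[Z_k² | Z_{k−1}] ≤ Z_{k−1}² + αZ_{k−1} + β. Then for all T, ε > 0 there exists L > 0 such that for all m ∈ ℕ, P(max_{k ≤ Tm} Z_k ≤ Lm | Z₀ = m) > 1 − ε. -/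
open MeasureTheory ProbabilityTheory Filter
open scoped ENNReal NNReal

noncomputable section

namespace Paper

set_option synthInstance.maxHeartbeats 1000000
set_option maxHeartbeats 2000000

/-- For a nonnegative Markov chain with one-step drift bounded by `γ` and
second moment growth `E[Z_k²|Z_{k−1}] ≤ Z_{k−1}² + αZ_{k−1} + β`, for all `T, ε > 0`
there is `L > 0` such that for all `m`, `P(max_{k≤Tm} Z_k ≤ Lm | Z₀ = m) > 1 − ε`. -/
theorem statement11 (α β γ : ℝ) (hα : 0 < α) (hβ : 0 < β) (hγ : 0 < γ)
    (T ε : ℝ) (hT : 0 < T) (hε : 0 < ε) :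
    ∃ L : ℝ, 0 < L ∧
      ∀ (m : ℕ) (Ω : Type) [MeasureSpace Ω] [IsProbabilityMeasure (volume : Measure Ω)],
      ∀ (F : ℕ → MeasurableSpace Ω) (Z : ℕ → Ω → ℝ),
        Monotone F → (∀ k, F k ≤ (inferInstance : MeasurableSpace Ω)) →
        (∀ k, @Measurable Ω ℝ (F k) _ (Z k)) →
        (∀ k, MemLp (Z k) 2 (volume : Measure Ω)) →
        (∀ᵐ ω ∂(volume : Measure Ω), ∀ k, 0 ≤ Z k ω) →
        (∀ k, ∀ᵐ ω ∂(volume : Measure Ω),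
          |((volume : Measure Ω)[Z (k + 1) | F k]) ω - Z k ω| ≤ γ) →
        (∀ k, ∀ᵐ ω ∂(volume : Measure Ω),
          ((volume : Measure Ω)[(fun ω' => (Z (k + 1) ω') ^ 2) | F k]) ω
            ≤ (Z k ω) ^ 2 + α * Z k ω + β) →
        (∀ᵐ ω ∂(volume : Measure Ω), Z 0 ω = m) →
        ENNReal.ofReal (1 - ε)
          < volume {ω | ∀ k : ℕ, (k : ℝ) ≤ T * m → Z k ω ≤ L * m} := by
  classical
  -- choose constants
  set ε' : ℝ := min ε 1 / 2 with hε'def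
  have hε'pos : 0 < ε' := by positivity
  have hε'lt : ε' < ε := by
    have h0 : 0 < min ε 1 := lt_min hε zero_lt_one
    calc ε' = min ε 1 / 2 := rfl
      _ < min ε 1 := by linarith
      _ ≤ ε := min_le_left _ _
  have hε'le : ε' ≤ 1 / 2 := by
    have := min_le_right ε 1
    simp only [hε'def]
    linarith
  set c : ℝ := 1 + 2 * T * γ with hcdef
  have hcpos : 0 < c := by positivity
  refine ⟨c / ε', by positivity, ?_⟩
  have hLε : c / ε' * ε' = c := div_mul_cancel₀ c hε'pos.ne'
  set L : ℝ := c / ε' with hLdef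
  have hLpos : 0 < L := by positivity
  intro m Ω _ _ F Z hmono hle hZmeas hZL2 hZnonneg hdrift _h2mom hZ0
  set μ : Measure Ω := volume with hμdef
  have hZint : ∀ k, Integrable (Z k) μ := fun k =>
    (hZL2 k).integrable (by norm_num)
  -- the target set is measurable
  set S : Set Ω := {ω | ∀ k : ℕ, (k : ℝ) ≤ T * m → Z k ω ≤ L * m} with hSdef
  have hSmeas : MeasurableSet S := by
    have : S = ⋂ k : ℕ, {ω | (k : ℝ) ≤ T * m → Z k ω ≤ L * m} := by
      ext ω; simp [hSdef, Set.mem_iInter]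
    rw [this]
    refine MeasurableSet.iInter fun k => ?_
    by_cases hk : (k : ℝ) ≤ T * m
    · have : {ω | (k : ℝ) ≤ T * m → Z k ω ≤ L * m} = {ω | Z k ω ≤ L * m} := by
        ext ω; simp [hk]
      rw [this]
      exact measurableSet_le ((hZmeas k).mono (hle k) le_rfl) measurable_const
    · have : {ω | (k : ℝ) ≤ T * m → Z k ω ≤ L * m} = Set.univ := by
        ext ω; simp [hk]
      rw [this]; exact MeasurableSet.univ
  -- reduce to a bound on the complement
  suffices hcompl : μ Sᶜ ≤ ENNReal.ofReal ε' by
    have h1 : μ S = 1 - μ Sᶜ := by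
      have := prob_compl_eq_one_sub (μ := μ) hSmeas
      have h2 : μ S = 1 - μ Sᶜ := by
        rw [this]
        rw [ENNReal.sub_sub_cancel ENNReal.one_ne_top (prob_le_one)]
      exact h2
    rw [h1]
    calc ENNReal.ofReal (1 - ε) < ENNReal.ofReal (1 - ε') := by
          refine (ENNReal.ofReal_lt_ofReal_iff (by linarith)).2 (by linarith)
      _ = 1 - ENNReal.ofReal ε' := by
          rw [ENNReal.ofReal_sub 1 hε'pos.le, ENNReal.ofReal_one]
      _ ≤ 1 - μ Sᶜ := tsub_le_tsub_left hcompl 1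
  -- case m = 0
  rcases Nat.eq_zero_or_pos m with hm0 | hm
  · subst hm0
    have hsub : Sᶜ ⊆ {ω | ¬ Z 0 ω = (0 : ℕ)} := by
      intro ω hω
      simp only [Set.mem_compl_iff, hSdef, Set.mem_setOf_eq] at hω
      push_neg at hω
      obtain ⟨k, hk1, hk2⟩ := hω
      have hk0 : k = 0 := by
        have : (k : ℝ) ≤ 0 := by simpa using hk1
        exact_mod_cast le_antisymm (by exact_mod_cast this) (Nat.zero_le k)
      subst hk0
      intro h
      rw [h] at hk2
      simp at hk2
    have : μ {ω | ¬ Z 0 ω = (0 : ℕ)} = 0 := ae_iff.1 hZ0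
    calc μ Sᶜ ≤ μ {ω | ¬ Z 0 ω = (0 : ℕ)} := measure_mono hsub
      _ = 0 := this
      _ ≤ ENNReal.ofReal ε' := zero_le
  -- main case m ≥ 1
  have hm1 : (1 : ℝ) ≤ m := by exact_mod_cast hm
  have hmpos : (0 : ℝ) < m := by linarith
  -- the filtration and the submartingale
  set ℱ : Filtration ℕ (inferInstance : MeasurableSpace Ω) := ⟨F, hmono, hle⟩ with hℱdef
  set f : ℕ → Ω → ℝ := fun k ω => Z k ω + k * γ with hfdef
  have hfint : ∀ k, Integrable (f k) μ := fun k => (hZint k).add (integrable_const _)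
  have hfadp : StronglyAdapted ℱ f := by
    intro k
    exact Measurable.stronglyMeasurable (Measurable.add (hZmeas k) measurable_const)
  have hfsub : Submartingale f ℱ μ := by
    refine submartingale_nat hfadp hfint fun i => ?_
    have heq : f (i + 1) = Z (i + 1) + fun _ => ((i + 1 : ℕ) : ℝ) * γ := rfl
    have hce : μ[f (i + 1)|ℱ i] =ᵐ[μ] μ[Z (i + 1)|ℱ i] + fun _ => ((i + 1 : ℕ) : ℝ) * γ := by
      rw [heq]
      refine (condExp_add (hZint (i + 1)) (integrable_const _) _).trans ?_
      filter_upwards [] with ω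
      simp [condExp_const (ℱ.le i)]
    filter_upwards [hce, hdrift i] with ω h1 h2
    have h4 : -γ ≤ (μ[Z (i + 1)|F i]) ω - Z i ω := (abs_le.1 h2).1
    have h5 : (μ[f (i + 1)|ℱ i]) ω = (μ[Z (i + 1)|ℱ i]) ω + ((i + 1 : ℕ) : ℝ) * γ := h1
    show Z i ω + (i : ℝ) * γ ≤ (μ[f (i + 1)|ℱ i]) ω
    rw [h5]
    push_cast
    have h6 : (μ[Z (i + 1)|ℱ i]) ω = (μ[Z (i + 1)|F i]) ω := rfl
    rw [h6]
    linarith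
  -- positive part
  have hgsub : Submartingale (f⁺) ℱ μ := hfsub.pos
  have hgnonneg : (0 : ℕ → Ω → ℝ) ≤ f⁺ := fun k ω => le_sup_right
  have hgge : ∀ k ω, f k ω ≤ (f⁺) k ω := fun k ω => le_sup_left
  -- expectation bound by induction
  have hEZ : ∀ k, ∫ ω, Z k ω ∂μ ≤ m + k * γ := by
    intro k
    induction k with
    | zero =>
      have : ∫ ω, Z 0 ω ∂μ = ∫ _ω, (m : ℝ) ∂μ := integral_congr_ae hZ0
      rw [this, integral_const]
      simp
    | succ k ih =>
      have h1 : ∫ ω, Z (k + 1) ω ∂μ = ∫ ω, (μ[Z (k + 1)|ℱ k]) ω ∂μ :=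
        (integral_condExp (hle k)).symm
      have h2 : (μ[Z (k + 1)|ℱ k]) ≤ᵐ[μ] fun ω => Z k ω + γ := by
        filter_upwards [hdrift k] with ω hω
        have := (abs_le.1 hω).2
        simpa [hℱdef] using by linarith [this]
      have h3 : ∫ ω, (μ[Z (k + 1)|ℱ k]) ω ∂μ ≤ ∫ ω, (Z k ω + γ) ∂μ :=
        integral_mono_ae integrable_condExp ((hZint k).add (integrable_const _)) h2
      have h4 : ∫ ω, (Z k ω + γ) ∂μ = (∫ ω, Z k ω ∂μ) + γ := by
        rw [integral_add (hZint k) (integrable_const _), integral_const]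
        simp
      rw [h1]
      push_cast
      calc ∫ ω, (μ[Z (k + 1)|ℱ k]) ω ∂μ ≤ (∫ ω, Z k ω ∂μ) + γ := by rw [← h4]; exact h3
        _ ≤ m + k * γ + γ := by linarith
        _ = m + (k + 1) * γ := by ring
  -- number of steps
  set n : ℕ := ⌊T * m⌋₊ with hndef
  have hTm : (0 : ℝ) ≤ T * m := by positivity
  have hnle : (n : ℝ) ≤ T * m := Nat.floor_le hTm
  have hEfn : ∫ ω, (f⁺) n ω ∂μ ≤ c * m := by
    have hfg : (f⁺) n =ᵐ[μ] f n := by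
      filter_upwards [hZnonneg] with ω hω
      have h0 : (0 : ℝ) ≤ f n ω := by
        have := hω n
        have : (0 : ℝ) ≤ Z n ω + n * γ := by positivity
        exact this
      exact sup_eq_left.2 h0
    rw [integral_congr_ae hfg]
    have h5 : ∫ ω, f n ω ∂μ = (∫ ω, Z n ω ∂μ) + n * γ := by
      simp only [hfdef]
      rw [integral_add (hZint n) (integrable_const _), integral_const]
      simp
    rw [h5]
    have hn2 : (n : ℝ) * γ ≤ T * m * γ := mul_le_mul_of_nonneg_right hnle hγ.le
    have := hEZ n
    calc (∫ ω, Z n ω ∂μ) + n * γ ≤ (m + n * γ) + n * γ := by linarith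
      _ ≤ m + 2 * (T * m * γ) := by linarith
      _ = c * m := by simp only [hcdef]; ring
  -- Doob's maximal inequality
  set εN : ℝ≥0 := (L * m).toNNReal with hεNdef
  have hεNreal : (εN : ℝ) = L * m := Real.coe_toNNReal _ (by positivity)
  set bad : Set Ω :=
    {ω | (εN : ℝ) ≤ (Finset.range (n + 1)).sup' Finset.nonempty_range_add_one fun k => (f⁺) k ω}
    with hbaddef
  have hdoob := maximal_ineq (μ := μ) (𝒢 := ℱ) hgsub hgnonneg (ε := εN) n
  have hintbad : ∫ ω in bad, (f⁺) n ω ∂μ ≤ ∫ ω, (f⁺) n ω ∂μ := by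
    refine setIntegral_le_integral (hgsub.integrable n) ?_
    filter_upwards [] with ω
    exact hgnonneg n ω
  have hchain : (εN : ℝ≥0∞) * μ bad ≤ (εN : ℝ≥0∞) * ENNReal.ofReal ε' := by
    calc (εN : ℝ≥0∞) * μ bad = εN • μ bad := rfl
      _ ≤ ENNReal.ofReal (∫ ω in bad, (f⁺) n ω ∂μ) := hdoob
      _ ≤ ENNReal.ofReal (∫ ω, (f⁺) n ω ∂μ) := ENNReal.ofReal_le_ofReal hintbad
      _ ≤ ENNReal.ofReal (c * m) := ENNReal.ofReal_le_ofReal hEfn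
      _ = (εN : ℝ≥0∞) * ENNReal.ofReal ε' := by
          have h1 : (εN : ℝ≥0∞) = ENNReal.ofReal (L * m) := rfl
          rw [h1, ← ENNReal.ofReal_mul (by positivity)]
          congr 1
          rw [← hLε]; ring
  have hεN0 : (εN : ℝ≥0∞) ≠ 0 := by
    simp only [ne_eq, ENNReal.coe_eq_zero]
    intro h
    have := hεNreal
    rw [h] at this
    simp at this
    rcases this with h1 | h1
    · exact absurd h1 hLpos.ne'
    · exact absurd h1 (by exact_mod_cast hm.ne')
  have hbadle : μ bad ≤ ENNReal.ofReal ε' :=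
    (ENNReal.mul_le_mul_iff_right hεN0 ENNReal.coe_ne_top).1 hchain
  -- Sᶜ ⊆ bad
  have hsubset : Sᶜ ⊆ bad := by
    intro ω hω
    simp only [Set.mem_compl_iff, hSdef, Set.mem_setOf_eq] at hω
    push_neg at hω
    obtain ⟨k, hk1, hk2⟩ := hω
    have hkn : k ∈ Finset.range (n + 1) := by
      rw [Finset.mem_range, Nat.lt_succ_iff]
      exact Nat.le_floor hk1
    have h1 : (εN : ℝ) ≤ (f⁺) k ω := by
      rw [hεNreal]
      calc L * m ≤ Z k ω := hk2.le
        _ ≤ f k ω := le_add_of_nonneg_right (by positivity)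
        _ ≤ (f⁺) k ω := hgge k ω
    exact le_trans h1 (Finset.le_sup' (fun k => (f⁺) k ω) hkn)
  calc μ Sᶜ ≤ μ bad := measure_mono hsubset
    _ ≤ ENNReal.ofReal ε' := hbadle

end Paper
end
end
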